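/- For all configurations P₁, …, P_n ⊂ ℝ^d (finite point sets), the independence density is supermultiplicative: m_{ℝ^d}(P₁, …, P_n) ≥ ∏_{i=1}^n m_{ℝ^d}(P_i), where m_{ℝ^d}(P₁,…,P_n) is the supremum of upper densities of measurable sets in ℝ^d containing no congruent copy of any of the P_i. -/

import Mathlib

open MeasureTheory Filter

noncomputable section

/-- Borel σ-algebra on real matrices. -/
instance matMeasurableSpace {d : ℕ} : MeasurableSpace (Matrix (Fin d) (Fin d) ℝ) := borel _

/-- The action of an orthogonal matrix on Euclidean space. -/
def act {d : ℕ} (T : Matrix.orthogonalGroup (Fin d) ℝ)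
    (v : EuclideanSpace ℝ (Fin d)) : EuclideanSpace ℝ (Fin d) :=
  (EuclideanSpace.equiv (Fin d) ℝ).symm
    ((T : Matrix (Fin d) (Fin d) ℝ).mulVec (EuclideanSpace.equiv (Fin d) ℝ v))

/-- Open axis-parallel cube of side length `R` centered at `x`. -/
def cube {d : ℕ} (x : EuclideanSpace ℝ (Fin d)) (R : ℝ) : Set (EuclideanSpace ℝ (Fin d)) :=
  {y | ∀ j, |y j - x j| < R / 2}

/-- `A` contains a congruent copy of the configuration `P`. -/
def hasCopy {d : ℕ} (A P : Set (EuclideanSpace ℝ (Fin d))) : Prop :=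
  ∃ (x : EuclideanSpace ℝ (Fin d)) (T : Matrix.orthogonalGroup (Fin d) ℝ),
    (fun p => x + act T p) '' P ⊆ A

/-- The upper density of a set `A ⊆ ℝ^d`. -/
def upperDensity {d : ℕ} (A : Set (EuclideanSpace ℝ (Fin d))) : ℝ :=
  limsup (fun T : ℝ =>
    (volume (A ∩ {y : EuclideanSpace ℝ (Fin d) | ∀ j, |y j| ≤ T})).toReal / (2 * T) ^ d) atTop

/-- Independence density of the configuration `P` in `ℝ^d`. -/
def mRd {d : ℕ} (P : Set (EuclideanSpace ℝ (Fin d))) : ℝ :=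
  sSup (upperDensity '' {A | MeasurableSet A ∧ ¬ hasCopy A P})

/-- Independence density of `P` relative to the cube `Q(0,R)`. -/
def mQcube {d : ℕ} (R : ℝ) (P : Set (EuclideanSpace ℝ (Fin d))) : ℝ :=
  sSup ((fun A => (volume A).toReal / R ^ d) ''
    {A | A ⊆ cube 0 R ∧ MeasurableSet A ∧ ¬ hasCopy A P})

/-! ### Auxiliary material -/

namespace Stmt4Aux

open Matrix

variable {d : ℕ}

def Box (d : ℕ) (T : ℝ) : Set (EuclideanSpace ℝ (Fin d)) := {y | ∀ j, |y j| ≤ T}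

lemma measurableSet_box (T : ℝ) : MeasurableSet (Box d T) := by
  have : Box d T = ⋂ j, {y : EuclideanSpace ℝ (Fin d) | |y j| ≤ T} := by
    ext y; simp [Box, Set.mem_iInter]
  rw [this]
  exact MeasurableSet.iInter fun j =>
    measurableSet_le ((continuous_abs.comp (EuclideanSpace.proj j).continuous).measurable)
      measurable_const

lemma box_preimage (T : ℝ) :
    (MeasurableEquiv.toLp 2 (Fin d → ℝ)) ⁻¹' (Box d T)
      = Set.pi Set.univ (fun _ : Fin d => Set.Icc (-T) T) := by
  ext y
  simp only [Set.mem_preimage, Box, Set.mem_setOf_eq, Set.mem_pi, Set.mem_univ,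
    Set.mem_Icc, forall_const, abs_le]
  rfl

lemma volume_box {T : ℝ} (hT : 0 ≤ T) :
    volume (Box d T) = ENNReal.ofReal ((2 * T) ^ d) := by
  have h : MeasurePreserving (MeasurableEquiv.toLp 2 (Fin d → ℝ)) volume volume :=
    (EuclideanSpace.volume_preserving_symm_measurableEquiv_toLp (Fin d)).symm
  rw [← h.measure_preimage (measurableSet_box T).nullMeasurableSet, box_preimage]
  rw [volume_pi_pi]
  simp [Real.volume_Icc, ENNReal.ofReal_pow (by linarith : (0:ℝ) ≤ 2 * T)]
  ring_nf
  rw [ENNReal.ofReal_mul hT, ENNReal.ofReal_ofNat, mul_pow]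

def fT (A : Set (EuclideanSpace ℝ (Fin d))) (T : ℝ) : ℝ :=
  (volume (A ∩ Box d T)).toReal / (2 * T) ^ d

lemma volume_inter_box_le (A : Set (EuclideanSpace ℝ (Fin d))) {T : ℝ} (hT : 0 ≤ T) :
    volume (A ∩ Box d T) ≤ ENNReal.ofReal ((2 * T) ^ d) := by
  rw [← volume_box hT]
  exact measure_mono Set.inter_subset_right

lemma volume_inter_box_lt_top (A : Set (EuclideanSpace ℝ (Fin d))) {T : ℝ} (hT : 0 ≤ T) :
    volume (A ∩ Box d T) < ⊤ :=
  lt_of_le_of_lt (volume_inter_box_le A hT) ENNReal.ofReal_lt_top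

lemma box_neg (hd : 0 < d) {T : ℝ} (hT : T < 0) :
    Box d T = (∅ : Set (EuclideanSpace ℝ (Fin d))) := by
  ext y
  simp only [Box, Set.mem_setOf_eq, Set.mem_empty_iff_false, iff_false, not_forall]
  exact ⟨⟨0, hd⟩, by intro h; linarith [abs_nonneg (y ⟨0, hd⟩)]⟩

lemma fT_nonneg (A : Set (EuclideanSpace ℝ (Fin d))) (T : ℝ) : 0 ≤ fT A T := by
  unfold fT
  rcases le_or_gt 0 ((2*T)^d) with h | h
  · positivity
  · have hd : 0 < d := by
      rcases Nat.eq_zero_or_pos d with h0 | h0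
      · exfalso; rw [h0] at h; norm_num at h
      · exact h0
    have hT : T < 0 := by
      by_contra hT
      push_neg at hT
      have : (0:ℝ) ≤ (2*T)^d := by positivity
      linarith
    rw [box_neg hd hT]
    simp

lemma fT_le_one (hd : 0 < d) (A : Set (EuclideanSpace ℝ (Fin d))) (T : ℝ) : fT A T ≤ 1 := by
  unfold fT
  rcases lt_trichotomy T 0 with h | h | h
  · rw [box_neg hd h]; simp
  · subst h
    have h0 : ((2:ℝ) * 0) ^ d = 0 := by
      rw [mul_zero, zero_pow hd.ne']
    rw [h0, div_zero]
    norm_num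
  · rw [div_le_one (by positivity)]
    have := volume_inter_box_le A h.le
    calc (volume (A ∩ Box d T)).toReal ≤ (ENNReal.ofReal ((2*T)^d)).toReal :=
          ENNReal.toReal_mono ENNReal.ofReal_ne_top this
      _ = (2*T)^d := ENNReal.toReal_ofReal (by positivity)

lemma isBounded_fT (hd : 0 < d) (A : Set (EuclideanSpace ℝ (Fin d))) :
    IsBoundedUnder (· ≤ ·) atTop (fT A) :=
  isBoundedUnder_of ⟨1, fun T => fT_le_one hd A T⟩

lemma isCobounded_fT (A : Set (EuclideanSpace ℝ (Fin d))) :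
    IsCoboundedUnder (· ≤ ·) atTop (fT A) :=
  IsBoundedUnder.isCoboundedUnder_le (isBoundedUnder_of ⟨0, fun T => fT_nonneg A T⟩)

lemma limsup_fT (A : Set (EuclideanSpace ℝ (Fin d))) :
    limsup (fT A) atTop = upperDensity A := rfl

lemma upperDensity_nonneg (hd : 0 < d) (A : Set (EuclideanSpace ℝ (Fin d))) :
    0 ≤ upperDensity A := by
  rw [← limsup_fT]
  exact le_limsup_of_frequently_le (Frequently.of_forall (fun T => fT_nonneg A T))
    (isBounded_fT hd A)

lemma upperDensity_le_one (hd : 0 < d) (A : Set (EuclideanSpace ℝ (Fin d))) :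
    upperDensity A ≤ 1 := by
  rw [← limsup_fT]
  exact limsup_le_of_le (isCobounded_fT A) (Eventually.of_forall (fT_le_one hd A))

lemma frequently_fT_ge (A : Set (EuclideanSpace ℝ (Fin d))) {ε : ℝ} (hε : 0 < ε) :
    ∃ᶠ T in atTop, upperDensity A - ε < fT A T :=
  frequently_lt_of_lt_limsup (isCobounded_fT A) (by rw [limsup_fT]; linarith)

lemma upperDensity_ge (hd : 0 < d) (A : Set (EuclideanSpace ℝ (Fin d))) {c : ℝ}
    (h : ∃ᶠ T in atTop, c ≤ fT A T) : c ≤ upperDensity A := by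
  rw [← limsup_fT]
  exact le_limsup_of_frequently_le h (isBounded_fT hd A)

abbrev ind (s : Set (EuclideanSpace ℝ (Fin d))) : EuclideanSpace ℝ (Fin d) → ENNReal :=
  s.indicator 1

lemma avg (A B : Set (EuclideanSpace ℝ (Fin d))) (hA : MeasurableSet A) (hB : MeasurableSet B)
    {T S : ℝ} (_hT : 0 ≤ T) (_hTS : T ≤ S) :
    volume (A ∩ Box d T) * volume (B ∩ Box d (S - T)) ≤
      ∫⁻ t in Box d S, volume (A ∩ ((fun y => y - t) ⁻¹' B) ∩ Box d T) := by
  classical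
  set Q := volume (B ∩ Box d (S - T)) with hQ
  have hmAT : MeasurableSet (A ∩ Box d T) := hA.inter (measurableSet_box T)
  have stepA : ∀ t : EuclideanSpace ℝ (Fin d),
      volume (A ∩ ((fun y => y - t) ⁻¹' B) ∩ Box d T)
        = ∫⁻ y, ind (A ∩ Box d T) y * ind B (y - t) := by
    intro t
    have hm : MeasurableSet (A ∩ ((fun y => y - t) ⁻¹' B) ∩ Box d T) :=
      (hA.inter (hB.preimage (measurable_id.sub measurable_const))).inter (measurableSet_box T)
    rw [← lintegral_indicator_one hm]
    refine lintegral_congr fun y => ?_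
    by_cases h1 : y ∈ A ∩ Box d T
    · by_cases h2 : y - t ∈ B
      · have : y ∈ A ∩ ((fun y => y - t) ⁻¹' B) ∩ Box d T :=
          ⟨⟨h1.1, h2⟩, h1.2⟩
        simp [Set.indicator_of_mem, this, h1, h2]
      · have : y ∉ A ∩ ((fun y => y - t) ⁻¹' B) ∩ Box d T := fun h => h2 h.1.2
        simp [Set.indicator_of_notMem, this, h2]
    · have : y ∉ A ∩ ((fun y => y - t) ⁻¹' B) ∩ Box d T := fun h => h1 ⟨h.1.1, h.2⟩
      simp [Set.indicator_of_notMem, this, h1]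
  have mF : Measurable (Function.uncurry fun (t y : EuclideanSpace ℝ (Fin d)) =>
      ind (Box d S) t * (ind (A ∩ Box d T) y * ind B (y - t))) := by
    have m1 : Measurable (ind (Box d S)) := (measurable_one).indicator (measurableSet_box S)
    have m2 : Measurable (ind (A ∩ Box d T)) := (measurable_one).indicator hmAT
    have m3 : Measurable (ind B) := (measurable_one).indicator hB
    exact ((m1.comp measurable_fst)).mul
      ((m2.comp measurable_snd).mul (m3.comp (measurable_snd.sub measurable_fst)))
  have stepB : (∫⁻ t in Box d S, volume (A ∩ ((fun y => y - t) ⁻¹' B) ∩ Box d T))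
      = ∫⁻ t, ∫⁻ y, ind (Box d S) t * (ind (A ∩ Box d T) y * ind B (y - t)) := by
    rw [← lintegral_indicator (measurableSet_box S)]
    refine lintegral_congr fun t => ?_
    by_cases h : t ∈ Box d S
    · rw [Set.indicator_of_mem h, stepA t]
      refine (lintegral_congr fun y => ?_)
      simp [ind, Set.indicator_of_mem h]
    · rw [Set.indicator_of_notMem h]
      symm
      simp only [ind, Set.indicator_of_notMem h, zero_mul]
      exact lintegral_zero
  have stepC : (∫⁻ t, ∫⁻ y, ind (Box d S) t * (ind (A ∩ Box d T) y * ind B (y - t)))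
      = ∫⁻ y, ∫⁻ t, ind (Box d S) t * (ind (A ∩ Box d T) y * ind B (y - t)) :=
    lintegral_lintegral_swap mF.aemeasurable
  have stepD : ∀ y : EuclideanSpace ℝ (Fin d),
      (A ∩ Box d T).indicator (fun _ => Q) y ≤
        ∫⁻ t, ind (Box d S) t * (ind (A ∩ Box d T) y * ind B (y - t)) := by
    intro y
    by_cases hy : y ∈ A ∩ Box d T
    · rw [Set.indicator_of_mem hy]
      have e1 : ∀ t, ind (Box d S) t * (ind (A ∩ Box d T) y * ind B (y - t))
          = ind (Box d S ∩ (fun t => y - t) ⁻¹' B) t := by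
        intro t
        by_cases h1 : t ∈ Box d S
        · by_cases h2 : y - t ∈ B
          · have h3 : t ∈ Box d S ∩ (fun t => y - t) ⁻¹' B := ⟨h1, h2⟩
            simp [ind, Set.indicator_of_mem, h3, h1, h2, hy]
          · have h3 : t ∉ Box d S ∩ (fun t => y - t) ⁻¹' B := fun h => h2 h.2
            simp [ind, Set.indicator_of_notMem, h3, h2]
        · have h3 : t ∉ Box d S ∩ (fun t => y - t) ⁻¹' B := fun h => h1 h.1
          simp [ind, Set.indicator_of_notMem, h3, h1]
      calc Q ≤ volume (Box d S ∩ (fun t => y - t) ⁻¹' B) := by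
              have hsub : (fun t : EuclideanSpace ℝ (Fin d) => y - t) ⁻¹' (B ∩ Box d (S - T))
                  ⊆ Box d S ∩ (fun t => y - t) ⁻¹' B := by
                intro t ht
                refine ⟨fun j => ?_, ht.1⟩
                have h1 : |y j| ≤ T := hy.2 j
                have h2 : |y j - t j| ≤ S - T := by
                  have := ht.2 j
                  simpa using this
                have : |t j| = |y j - (y j - t j)| := by ring_nf
                rw [this]
                calc |y j - (y j - t j)| ≤ |y j| + |y j - t j| := abs_sub _ _
                  _ ≤ S := by linarith
              have hvol : volume ((fun t : EuclideanSpace ℝ (Fin d) => y - t) ⁻¹'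
                  (B ∩ Box d (S - T))) = Q := by
                have : (fun t : EuclideanSpace ℝ (Fin d) => y - t)
                    = (fun t => y + t) ∘ (fun t => -t) := by
                  funext t; simp [sub_eq_add_neg]
                rw [this, Set.preimage_comp, Measure.measure_preimage_neg,
                  measure_preimage_add]
              rw [← hvol]
              exact measure_mono hsub
        _ = ∫⁻ t, ind (Box d S ∩ (fun t => y - t) ⁻¹' B) t :=
              (lintegral_indicator_one
                ((measurableSet_box S).inter (hB.preimage (measurable_id'.const_sub y)))).symm
        _ = _ := lintegral_congr fun t => (e1 t).symm
    · rw [Set.indicator_of_notMem hy]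
      exact zero_le
  calc volume (A ∩ Box d T) * Q = Q * volume (A ∩ Box d T) := mul_comm _ _
    _ = ∫⁻ y, (A ∩ Box d T).indicator (fun _ => Q) y := (lintegral_indicator_const hmAT Q).symm
    _ ≤ ∫⁻ y, ∫⁻ t, ind (Box d S) t * (ind (A ∩ Box d T) y * ind B (y - t)) :=
        lintegral_mono stepD
    _ = ∫⁻ t, ∫⁻ y, ind (Box d S) t * (ind (A ∩ Box d T) y * ind B (y - t)) := stepC.symm
    _ = _ := stepB.symm

lemma exists_translate (A B : Set (EuclideanSpace ℝ (Fin d)))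
    (hA : MeasurableSet A) (hB : MeasurableSet B)
    {T S : ℝ} (hT : 0 ≤ T) (hTS : T ≤ S) (hS : 0 < S) {δ : ENNReal} (hδ : 0 < δ) :
    ∃ t : EuclideanSpace ℝ (Fin d),
      volume (A ∩ Box d T) * volume (B ∩ Box d (S - T)) ≤
        volume (Box d S) * volume (A ∩ ((fun y => y - t) ⁻¹' B) ∩ Box d T) + δ := by
  by_contra hcon
  push_neg at hcon
  set Pr := volume (A ∩ Box d T) * volume (B ∩ Box d (S - T)) with hPr
  have hPrtop : Pr ≠ ⊤ := by
    apply ne_of_lt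
    exact ENNReal.mul_lt_top (volume_inter_box_lt_top A hT)
      (volume_inter_box_lt_top B (by linarith))
  have hv0 : volume (Box d S) ≠ 0 := by
    rw [volume_box hS.le]
    simp only [ne_eq, ENNReal.ofReal_eq_zero, not_le]
    positivity
  have hvtop : volume (Box d S) ≠ ⊤ := by
    rw [volume_box hS.le]; exact ENNReal.ofReal_ne_top
  have hbound : ∀ t, volume (A ∩ ((fun y => y - t) ⁻¹' B) ∩ Box d T)
      ≤ (Pr - δ) / volume (Box d S) := by
    intro t
    have h1 := hcon t
    have hdt : δ ≠ ⊤ := by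
      intro h
      rw [h] at h1
      simp at h1
    have h2 : volume (Box d S) * volume (A ∩ ((fun y => y - t) ⁻¹' B) ∩ Box d T) ≤ Pr - δ :=
      ENNReal.le_sub_of_add_le_right hdt h1.le
    rw [ENNReal.le_div_iff_mul_le (Or.inl hv0) (Or.inl hvtop), mul_comm]
    exact h2
  have havg := avg A B hA hB hT hTS
  have hint : (∫⁻ t in Box d S, volume (A ∩ ((fun y => y - t) ⁻¹' B) ∩ Box d T))
      ≤ (Pr - δ) / volume (Box d S) * volume (Box d S) := by
    calc (∫⁻ t in Box d S, volume (A ∩ ((fun y => y - t) ⁻¹' B) ∩ Box d T))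
        ≤ ∫⁻ _ in Box d S, (Pr - δ) / volume (Box d S) :=
          lintegral_mono fun t => hbound t
      _ = (Pr - δ) / volume (Box d S) * volume (Box d S) := by
          rw [setLIntegral_const]
  have hfin : Pr ≤ Pr - δ := by
    calc Pr ≤ (Pr - δ) / volume (Box d S) * volume (Box d S) := le_trans havg hint
      _ = Pr - δ := ENNReal.div_mul_cancel hv0 hvtop
  rcases eq_or_ne Pr 0 with h0 | h0
  · rw [h0] at hcon
    exact absurd (hcon 0) (by simp)
  · have : Pr - δ < Pr := ENNReal.sub_lt_self hPrtop h0 hδ.ne'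
    exact absurd hfin (not_le.mpr this)

lemma ofReal_le_volume_inter_box (A : Set (EuclideanSpace ℝ (Fin d))) {T c' : ℝ}
    (hT : 0 < T) (h : c' ≤ fT A T) :
    ENNReal.ofReal (c' * (2*T)^d) ≤ volume (A ∩ Box d T) := by
  have hden : (0:ℝ) < (2*T)^d := by positivity
  have h2 : c' * (2*T)^d ≤ (volume (A ∩ Box d T)).toReal := by
    rw [fT, le_div_iff₀ hden] at h; exact h
  calc ENNReal.ofReal (c'*(2*T)^d) ≤ ENNReal.ofReal ((volume (A ∩ Box d T)).toReal) :=
        ENNReal.ofReal_le_ofReal h2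
    _ = volume (A ∩ Box d T) := ENNReal.ofReal_toReal (volume_inter_box_lt_top A hT.le).ne

lemma choice_step (hd : 0 < d) (A B : Set (EuclideanSpace ℝ (Fin d)))
    (hA : MeasurableSet A) (hB : MeasurableSet B)
    {ε : ℝ} (hε : 0 < ε) (hε1 : ε ≤ 1) (L : ℝ) :
    ∃ (T : ℝ) (t : EuclideanSpace ℝ (Fin d)), L < T ∧ 1 ≤ T ∧
      (2*L)^d ≤ ε * (2*T)^d ∧
      ENNReal.ofReal (((upperDensity A - ε) * (upperDensity B - ε) - ε) * (2*T)^d)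
        ≤ volume (A ∩ ((fun y => y - t) ⁻¹' B) ∩ Box d T) := by
  set a := upperDensity A with ha
  set b := upperDensity B with hb
  set c := (a - ε) * (b - ε) - ε with hc
  have hgrow : Tendsto (fun T : ℝ => ε * (2*T)^d) atTop atTop := by
    apply Tendsto.const_mul_atTop hε
    exact (tendsto_pow_atTop hd.ne').comp (Tendsto.const_mul_atTop two_pos tendsto_id)
  have E1 : ∀ᶠ T in atTop, L < T ∧ 1 ≤ T ∧ (2*L)^d ≤ ε * (2*T)^d :=
    (eventually_gt_atTop L).and ((eventually_ge_atTop 1).and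
      (hgrow.eventually_ge_atTop ((2*L)^d)))
  rcases le_or_gt c 0 with hc0 | hc0
  · obtain ⟨T, hTL, hT1, hTg⟩ := E1.exists
    refine ⟨T, 0, hTL, hT1, hTg, ?_⟩
    have h0 : c * (2*T)^d ≤ 0 := mul_nonpos_of_nonpos_of_nonneg hc0 (by positivity)
    rw [ENNReal.ofReal_eq_zero.mpr h0]
    exact zero_le
  · have ha' : 0 < a - ε := by
      nlinarith [upperDensity_nonneg hd A, upperDensity_nonneg hd B,
        upperDensity_le_one hd A, upperDensity_le_one hd B]
    have hb' : 0 < b - ε := by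
      nlinarith [upperDensity_nonneg hd A, upperDensity_nonneg hd B,
        upperDensity_le_one hd A, upperDensity_le_one hd B]
    obtain ⟨T, hfa, hTL, hT1, hTg⟩ := ((frequently_fT_ge A hε).and_eventually E1).exists
    have hT0 : (0:ℝ) < T := lt_of_lt_of_le one_pos hT1
    have hb2 : 0 < ε/2 := by linarith
    have hr1 : (1:ℝ) < (b - ε/2)/(b - ε) := by
      rw [lt_div_iff₀ hb']
      linarith
    have htends : Tendsto (fun R : ℝ => ((R + T)/R)^d) atTop (nhds 1) := by
      have h0 : Tendsto (fun R : ℝ => 1 + T * R⁻¹) atTop (nhds 1) := by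
        have h1 := (tendsto_inv_atTop_zero (𝕜 := ℝ)).const_mul T
        simpa using (tendsto_const_nhds (x := (1:ℝ)) (f := atTop)).add h1
      have hcg : ∀ᶠ R : ℝ in atTop, 1 + T * R⁻¹ = ((R+T)/R) := by
        filter_upwards [eventually_gt_atTop 0] with R hR
        field_simp
      have h1 : Tendsto (fun R : ℝ => (R+T)/R) atTop (nhds 1) := Tendsto.congr' hcg h0
      simpa using h1.pow d
    have E2 : ∀ᶠ R : ℝ in atTop, (b - ε)*(2*(R + T))^d ≤ (b - ε/2)*(2*R)^d := by
      filter_upwards [htends.eventually_lt_const hr1, eventually_gt_atTop 0] with R h1 hR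
      have he : (2*(R+T))^d = (2*R)^d * ((R+T)/R)^d := by
        rw [← mul_pow]
        congr 1
        field_simp
      rw [he]
      calc (b-ε)*((2*R)^d * ((R+T)/R)^d) = (2*R)^d * ((b-ε) * ((R+T)/R)^d) := by ring
        _ ≤ (2*R)^d * ((b-ε) * ((b-ε/2)/(b-ε))) := by
            apply mul_le_mul_of_nonneg_left _ (by positivity)
            exact mul_le_mul_of_nonneg_left h1.le hb'.le
        _ = (b - ε/2)*(2*R)^d := by
            rw [mul_div_cancel₀ _ hb'.ne']
            ring
    obtain ⟨R, hfb, hR0, hE2⟩ :=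
      ((frequently_fT_ge B hb2).and_eventually ((eventually_gt_atTop 0).and E2)).exists
    set S := R + T with hS
    have hS0 : 0 < S := by positivity
    have hTS : T ≤ S := by simp [hS]; linarith
    have hST : S - T = R := by simp [hS]
    have hvolB : ENNReal.ofReal ((b - ε)*(2*S)^d) ≤ volume (B ∩ Box d (S - T)) := by
      rw [hST]
      refine le_trans (ENNReal.ofReal_le_ofReal ?_) (ofReal_le_volume_inter_box B hR0 hfb.le)
      simpa [hS] using hE2
    have hvolA : ENNReal.ofReal ((a-ε)*(2*T)^d) ≤ volume (A ∩ Box d T) :=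
      ofReal_le_volume_inter_box A hT0 hfa.le
    set δ : ENNReal := ENNReal.ofReal ((ε/2) * ((2*T)^d * (2*S)^d)) with hδdef
    have hδ : 0 < δ := by
      rw [hδdef, ENNReal.ofReal_pos]
      positivity
    obtain ⟨t, ht⟩ := exists_translate A B hA hB hT0.le hTS hS0 hδ
    refine ⟨T, t, hTL, hT1, hTg, ?_⟩
    set g := volume (A ∩ ((fun y => y - t) ⁻¹' B) ∩ Box d T) with hg
    have hX : ENNReal.ofReal ((a-ε)*(b-ε)*((2*T)^d*(2*S)^d)) ≤ volume (Box d S) * g + δ := by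
      calc ENNReal.ofReal ((a-ε)*(b-ε)*((2*T)^d*(2*S)^d))
          = ENNReal.ofReal ((a-ε)*(2*T)^d) * ENNReal.ofReal ((b-ε)*(2*S)^d) := by
            rw [← ENNReal.ofReal_mul (by positivity)]
            ring_nf
        _ ≤ volume (A ∩ Box d T) * volume (B ∩ Box d (S - T)) := mul_le_mul' hvolA hvolB
        _ ≤ volume (Box d S) * g + δ := ht
    have hY : ENNReal.ofReal (((a-ε)*(b-ε) - ε/2) * ((2*T)^d*(2*S)^d))
        ≤ volume (Box d S) * g := by
      have e1 : ((a-ε)*(b-ε) - ε/2) * ((2*T)^d*(2*S)^d)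
          = (a-ε)*(b-ε)*((2*T)^d*(2*S)^d) - (ε/2) * ((2*T)^d*(2*S)^d) := by ring
      rw [e1, ENNReal.ofReal_sub _ (by positivity)]
      rw [← hδdef]
      exact tsub_le_iff_right.mpr hX
    have hv0 : volume (Box d S) ≠ 0 := by
      rw [volume_box hS0.le]
      simp only [ne_eq, ENNReal.ofReal_eq_zero, not_le]
      positivity
    have hvtop : volume (Box d S) ≠ ⊤ := by
      rw [volume_box hS0.le]; exact ENNReal.ofReal_ne_top
    have hcancel : ENNReal.ofReal (((a-ε)*(b-ε) - ε/2) * (2*T)^d) ≤ g := by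
      rw [← ENNReal.mul_le_mul_iff_right hv0 hvtop]
      calc volume (Box d S) * ENNReal.ofReal (((a-ε)*(b-ε) - ε/2) * (2*T)^d)
          = ENNReal.ofReal ((2*S)^d) * ENNReal.ofReal (((a-ε)*(b-ε) - ε/2) * (2*T)^d) := by
            rw [volume_box hS0.le]
        _ = ENNReal.ofReal (((a-ε)*(b-ε) - ε/2) * ((2*T)^d*(2*S)^d)) := by
            rw [← ENNReal.ofReal_mul (by positivity)]
            ring_nf
        _ ≤ volume (Box d S) * g := hY
    refine le_trans (ENNReal.ofReal_le_ofReal ?_) hcancel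
    apply mul_le_mul_of_nonneg_right _ (by positivity)
    rw [hc]
    linarith

lemma act_sub' (T : Matrix.orthogonalGroup (Fin d) ℝ) (v w : EuclideanSpace ℝ (Fin d)) :
    act T v - act T w = act T (v - w) := by
  unfold act
  ext j
  simp [Matrix.mulVec_sub]

lemma act_norm (T : Matrix.orthogonalGroup (Fin d) ℝ) (v : EuclideanSpace ℝ (Fin d)) :
    ‖act T v‖ = ‖v‖ := by
  have h : (Matrix.transpose (T : Matrix (Fin d) (Fin d) ℝ) * (T : Matrix (Fin d) (Fin d) ℝ)) = 1 := by
    have := T.2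
    rw [Matrix.mem_orthogonalGroup_iff'] at this
    simpa [Matrix.star_eq_conjTranspose] using this
  rw [EuclideanSpace.norm_eq, EuclideanSpace.norm_eq]
  congr 1
  have key : ∀ w : Fin d → ℝ, (∑ i, ((T : Matrix (Fin d) (Fin d) ℝ).mulVec w i)^2)
      = ∑ i, (w i)^2 := by
    intro w
    have e1 : (∑ i, ((T : Matrix (Fin d) (Fin d) ℝ).mulVec w i)^2)
        = ((T : Matrix (Fin d) (Fin d) ℝ).mulVec w) ⬝ᵥ
          ((T : Matrix (Fin d) (Fin d) ℝ).mulVec w) := by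
      simp [dotProduct, pow_two]
    have e2 : (∑ i, (w i)^2) = w ⬝ᵥ w := by simp [dotProduct, pow_two]
    rw [e1, e2, Matrix.dotProduct_mulVec, ← Matrix.mulVec_transpose, Matrix.mulVec_mulVec, h,
      Matrix.one_mulVec]
  have hcoord : ∀ i, act T v i = (T : Matrix (Fin d) (Fin d) ℝ).mulVec v i := fun _ => rfl
  simp only [Real.norm_eq_abs, sq_abs, hcoord]
  exact key v

lemma dist_act (T : Matrix.orthogonalGroup (Fin d) ℝ) (x p q : EuclideanSpace ℝ (Fin d)) :
    dist (x + act T p) (x + act T q) = dist p q := by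
  rw [dist_eq_norm, dist_eq_norm, add_sub_add_left_eq_sub, act_sub', act_norm]

lemma coord_le_norm (w : EuclideanSpace ℝ (Fin d)) (j : Fin d) : |w j| ≤ ‖w‖ := by
  rw [EuclideanSpace.norm_eq]
  have h1 : (w j)^2 ≤ ∑ i, ‖w i‖^2 := by
    have := Finset.single_le_sum (f := fun i => ‖w i‖^2)
      (fun i _ => sq_nonneg _) (Finset.mem_univ j)
    simpa [Real.norm_eq_abs, sq_abs] using this
  calc |w j| = Real.sqrt ((w j)^2) := (Real.sqrt_sq_eq_abs _).symm
    _ ≤ _ := Real.sqrt_le_sqrt h1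

lemma key_lemma (hd : 0 < d) (A B : Set (EuclideanSpace ℝ (Fin d)))
    (hA : MeasurableSet A) (hB : MeasurableSet B) {D₀ : ℝ} (hD₀ : 0 ≤ D₀)
    {ε : ℝ} (hε : 0 < ε) (hε1 : ε ≤ 1) :
    ∃ C : Set (EuclideanSpace ℝ (Fin d)), MeasurableSet C ∧ C ⊆ A ∧
      (∀ Pc : Set (EuclideanSpace ℝ (Fin d)),
        (∀ p ∈ Pc, ∀ q ∈ Pc, dist p q ≤ D₀) → hasCopy C Pc → hasCopy B Pc) ∧
      (upperDensity A - ε) * (upperDensity B - ε) - 2*ε ≤ upperDensity C := by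
  classical
  set a := upperDensity A with ha
  set b := upperDensity B with hb
  set D := D₀ + 1 with hD
  have hD1 : 1 ≤ D := by rw [hD]; linarith
  have step := fun L => choice_step hd A B hA hB hε hε1 L
  obtain ⟨F, hF⟩ : ∃ F : ℝ → ℝ × EuclideanSpace ℝ (Fin d),
      ∀ L, L < (F L).1 ∧ 1 ≤ (F L).1 ∧ (2*L)^d ≤ ε * (2*(F L).1)^d ∧
      ENNReal.ofReal (((a - ε) * (b - ε) - ε) * (2*(F L).1)^d)
        ≤ volume (A ∩ ((fun y => y - (F L).2) ⁻¹' B) ∩ Box d (F L).1) := by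
    choose f g h1 h2 h3 h4 using step
    exact ⟨fun L => (f L, g L), fun L => ⟨h1 L, h2 L, h3 L, h4 L⟩⟩
  let seq : ℕ → ℝ × EuclideanSpace ℝ (Fin d) :=
    fun k => Nat.rec (⟨0, 0⟩ : ℝ × EuclideanSpace ℝ (Fin d)) (fun _ prev => F (prev.1 + D)) k
  let Tk : ℕ → ℝ := fun k => (seq k).1
  let tk : ℕ → EuclideanSpace ℝ (Fin d) := fun k => (seq k).2
  have hprop : ∀ k, Tk k + D < Tk (k+1) ∧ 1 ≤ Tk (k+1) ∧
      (2*(Tk k + D))^d ≤ ε * (2*(Tk (k+1)))^d ∧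
      ENNReal.ofReal (((a-ε)*(b-ε) - ε) * (2*(Tk (k+1)))^d)
        ≤ volume (A ∩ ((fun y => y - tk (k+1)) ⁻¹' B) ∩ Box d (Tk (k+1))) := by
    intro k
    exact hF ((seq k).1 + D)
  have hT00 : Tk 0 = 0 := rfl
  have hTnn : ∀ k, 0 ≤ Tk k := by
    intro k
    cases k with
    | zero => rw [hT00]
    | succ m => linarith [(hprop m).2.1]
  have hlt : ∀ k, Tk k < Tk (k+1) := fun k => by linarith [(hprop k).1]
  have hsm : StrictMono Tk := strictMono_nat_of_lt_succ hlt
  have hk_le : ∀ k : ℕ, (k:ℝ) ≤ Tk k := by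
    intro k
    induction k with
    | zero => rw [hT00]; norm_num
    | succ m ih => push_cast; linarith [(hprop m).1]
  let piece : ℕ → Set (EuclideanSpace ℝ (Fin d)) := fun k =>
    A ∩ ((fun y => y - tk (k+1)) ⁻¹' B) ∩ (Box d (Tk (k+1)) \ Box d (Tk k + D))
  let C := ⋃ k, piece k
  have hmeasC : MeasurableSet C := MeasurableSet.iUnion fun k =>
    (hA.inter (hB.preimage (measurable_id.sub measurable_const))).inter
      ((measurableSet_box _).diff (measurableSet_box _))
  have hCA : C ⊆ A := Set.iUnion_subset fun k => fun y hy => hy.1.1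
  have hsep : ∀ k m, k < m → ∀ u ∈ piece k, ∀ v ∈ piece m, D < dist u v := by
    intro k m hkm u hu v hv
    obtain ⟨j, hj⟩ : ∃ j, Tk m + D < |v j| := by
      by_contra hco
      push_neg at hco
      exact hv.2.2 (fun j => hco j)
    have hu' : |u j| ≤ Tk (k+1) := hu.2.1 j
    have hTle : Tk (k+1) ≤ Tk m := hsm.monotone (Nat.succ_le_of_lt hkm)
    have hDlt : D < |v j| - |u j| := by linarith
    have habs : |v j| - |u j| ≤ |u j - v j| := by
      rw [abs_sub_comm]
      exact abs_sub_abs_le_abs_sub _ _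
    have hco : (u - v) j = u j - v j := rfl
    calc D < |v j| - |u j| := hDlt
      _ ≤ |u j - v j| := habs
      _ = |(u - v) j| := by rw [hco]
      _ ≤ ‖u - v‖ := coord_le_norm _ j
      _ = dist u v := (dist_eq_norm u v).symm
  have hcopy : ∀ Pc : Set (EuclideanSpace ℝ (Fin d)),
      (∀ p ∈ Pc, ∀ q ∈ Pc, dist p q ≤ D₀) → hasCopy C Pc → hasCopy B Pc := by
    intro Pc hPc hcp
    obtain ⟨x, R, himg⟩ := hcp
    rcases Set.eq_empty_or_nonempty Pc with hemp | ⟨p₀, hp₀⟩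
    · exact ⟨0, 1, by simp [hemp]⟩
    · have h0 : x + act R p₀ ∈ C := himg ⟨p₀, hp₀, rfl⟩
      obtain ⟨k₀, hk₀⟩ := Set.mem_iUnion.mp h0
      have hall : ∀ p ∈ Pc, x + act R p ∈ piece k₀ := by
        intro p hp
        have hpC : x + act R p ∈ C := himg ⟨p, hp, rfl⟩
        obtain ⟨m, hm⟩ := Set.mem_iUnion.mp hpC
        have hdist : dist (x + act R p) (x + act R p₀) = dist p p₀ := dist_act R x p p₀
        have hDp : dist p p₀ ≤ D₀ := hPc p hp p₀ hp₀
        rcases lt_trichotomy m k₀ with h | h | h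
        · exfalso
          have := hsep m k₀ h _ hm _ hk₀
          rw [dist_comm] at hdist
          rw [dist_comm] at this
          rw [hdist] at this
          rw [hD] at this
          linarith
        · rw [← h]; exact hm
        · exfalso
          have := hsep k₀ m h _ hk₀ _ hm
          rw [dist_comm] at this
          rw [hdist] at this
          rw [hD] at this
          linarith
      refine ⟨x - tk (k₀+1), R, ?_⟩
      rintro _ ⟨p, hp, rfl⟩
      have hmem : (x + act R p) - tk (k₀+1) ∈ B := (hall p hp).1.2
      have e : x - tk (k₀+1) + act R p = (x + act R p) - tk (k₀+1) := by abel
      show x - tk (k₀+1) + act R p ∈ B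
      rw [e]
      exact hmem
  set c2 : ℝ := (a-ε)*(b-ε) - 2*ε with hc2
  have hdens : ∀ k, c2 ≤ fT C (Tk (k+1)) := by
    intro k
    have hT1 : 1 ≤ Tk (k+1) := (hprop k).2.1
    have hTpos : 0 < Tk (k+1) := lt_of_lt_of_le one_pos hT1
    have hvol : ENNReal.ofReal (c2 * (2*(Tk (k+1)))^d) ≤ volume (C ∩ Box d (Tk (k+1))) := by
      have hsub : piece k ⊆ C ∩ Box d (Tk (k+1)) :=
        fun y hy => ⟨Set.mem_iUnion.mpr ⟨k, hy⟩, hy.2.1⟩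
      refine le_trans ?_ (measure_mono hsub)
      have hXd : piece k = (A ∩ ((fun y => y - tk (k+1)) ⁻¹' B) ∩ Box d (Tk (k+1)))
          \ Box d (Tk k + D) := by
        ext y
        simp only [piece, Set.mem_inter_iff, Set.mem_diff]
        tauto
      rw [hXd]
      set X := A ∩ ((fun y => y - tk (k+1)) ⁻¹' B) ∩ Box d (Tk (k+1)) with hX
      set Y := Box d (Tk k + D) with hY
      have hlow : volume X - volume Y ≤ volume (X \ Y) := by
        rw [tsub_le_iff_right]
        calc volume X ≤ volume ((X \ Y) ∪ Y) := measure_mono (Set.subset_diff_union X Y)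
          _ ≤ volume (X \ Y) + volume Y := measure_union_le _ _
      refine le_trans ?_ hlow
      have h1 := (hprop k).2.2.2
      have h2 : volume Y ≤ ENNReal.ofReal (ε * (2*(Tk (k+1)))^d) := by
        rw [hY, volume_box (by linarith [hTnn k] : (0:ℝ) ≤ Tk k + D)]
        exact ENNReal.ofReal_le_ofReal (hprop k).2.2.1
      have e1 : c2 * (2*(Tk (k+1)))^d
          = ((a-ε)*(b-ε) - ε) * (2*(Tk (k+1)))^d - ε * (2*(Tk (k+1)))^d := by
        rw [hc2]; ring
      rw [e1, ENNReal.ofReal_sub _ (by positivity)]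
      exact tsub_le_tsub h1 h2
    rcases le_or_gt c2 0 with h | h
    · exact le_trans h (fT_nonneg C _)
    · have hfin := volume_inter_box_lt_top C hTpos.le
      have h3 : c2 * (2*(Tk (k+1)))^d ≤ (volume (C ∩ Box d (Tk (k+1)))).toReal := by
        have := ENNReal.toReal_mono hfin.ne hvol
        rwa [ENNReal.toReal_ofReal (by positivity)] at this
      rw [fT, le_div_iff₀ (by positivity)]
      exact h3
  refine ⟨C, hmeasC, hCA, hcopy, ?_⟩
  have hfinal : c2 ≤ upperDensity C := by
    apply upperDensity_ge hd
    rw [frequently_atTop]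
    intro M
    obtain ⟨k, hk⟩ := exists_nat_ge M
    refine ⟨Tk (k+1), ?_, hdens k⟩
    calc M ≤ (k:ℝ) := hk
      _ ≤ ((k+1 : ℕ):ℝ) := by push_cast; linarith
      _ ≤ Tk (k+1) := hk_le (k+1)
  rw [hc2] at hfinal
  exact hfinal

lemma hasCopy_mono {C A Pc : Set (EuclideanSpace ℝ (Fin d))} (h : C ⊆ A) :
    hasCopy C Pc → hasCopy A Pc := fun ⟨x, T, himg⟩ => ⟨x, T, himg.trans h⟩

lemma not_hasCopy_empty {Pc : Set (EuclideanSpace ℝ (Fin d))} (h : Pc.Nonempty) :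
    ¬ hasCopy (∅ : Set (EuclideanSpace ℝ (Fin d))) Pc := by
  rintro ⟨x, T, himg⟩
  obtain ⟨p, hp⟩ := h
  exact himg ⟨p, hp, rfl⟩

lemma upperDensity_bddAbove (hd : 0 < d) (s : Set (Set (EuclideanSpace ℝ (Fin d)))) :
    BddAbove (upperDensity '' s) := by
  refine ⟨1, ?_⟩
  rintro x ⟨A, _, rfl⟩
  exact upperDensity_le_one hd A

lemma one_le_upperDensity_univ (hd : 0 < d) :
    (1:ℝ) ≤ upperDensity (Set.univ : Set (EuclideanSpace ℝ (Fin d))) := by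
  apply upperDensity_ge hd
  refine ((eventually_ge_atTop (1:ℝ)).mono fun T hT => ?_).frequently
  have hT0 : (0:ℝ) < T := lt_of_lt_of_le one_pos hT
  have : fT (Set.univ : Set (EuclideanSpace ℝ (Fin d))) T = 1 := by
    rw [fT, Set.univ_inter, volume_box hT0.le, ENNReal.toReal_ofReal (by positivity),
      div_self (by positivity)]
  rw [this]

end Stmt4Aux

/-- supermultiplicativity of the independence density in Euclidean space. -/
theorem stmt_4 {d n : ℕ} (hd : 0 < d)
    (P : Fin n → Set (EuclideanSpace ℝ (Fin d))) (hPfin : ∀ i, (P i).Finite) :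
    (∏ i, mRd (P i)) ≤
      sSup (upperDensity '' {A | MeasurableSet A ∧ ∀ i, ¬ hasCopy A (P i)}) := by
  classical
  open Stmt4Aux in
  by_cases hemp : ∃ i, P i = ∅
  · obtain ⟨i0, hi0⟩ := hemp
    have hm0 : mRd (P i0) = 0 := by
      unfold mRd
      have he : {A : Set (EuclideanSpace ℝ (Fin d)) | MeasurableSet A ∧ ¬ hasCopy A (P i0)}
          = ∅ := by
        ext A
        simp only [Set.mem_setOf_eq, Set.mem_empty_iff_false, iff_false, not_and, not_not]
        intro _
        exact ⟨0, 1, by simp [hi0]⟩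
      rw [he]
      simp [Real.sSup_empty]
    have hprod : (∏ i, mRd (P i)) = 0 := Finset.prod_eq_zero (Finset.mem_univ i0) hm0
    rw [hprod]
    rcases Set.eq_empty_or_nonempty
        {A : Set (EuclideanSpace ℝ (Fin d)) | MeasurableSet A ∧ ∀ i, ¬ hasCopy A (P i)}
      with he | ⟨A0, hA0⟩
    · rw [he]
      simp [Real.sSup_empty]
    · exact le_trans (upperDensity_nonneg hd A0)
        (le_csSup (upperDensity_bddAbove hd _) ⟨A0, hA0, rfl⟩)
  · push_neg at hemp
    have hPne : ∀ i, (P i).Nonempty := hemp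
    have hDi : ∀ i, ∃ D₀, 0 ≤ D₀ ∧ ∀ p ∈ P i, ∀ q ∈ P i, dist p q ≤ D₀ := by
      intro i
      obtain ⟨Dc, hDc⟩ := Metric.isBounded_iff.mp (hPfin i).isBounded
      exact ⟨max Dc 0, le_max_right _ _,
        fun p hp q hq => le_trans (hDc hp hq) (le_max_left _ _)⟩
    have hmRd_nonneg : ∀ i, 0 ≤ mRd (P i) := by
      intro i
      refine le_trans (upperDensity_nonneg hd ∅) (le_csSup (upperDensity_bddAbove hd _) ?_)
      exact ⟨∅, ⟨MeasurableSet.empty, not_hasCopy_empty (hPne i)⟩, rfl⟩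
    have hmRd_le_one : ∀ i, mRd (P i) ≤ 1 := by
      intro i
      apply csSup_le (Set.Nonempty.image upperDensity
        (⟨∅, MeasurableSet.empty, not_hasCopy_empty (hPne i)⟩ :
          Set.Nonempty {A : Set (EuclideanSpace ℝ (Fin d)) |
            MeasurableSet A ∧ ¬ hasCopy A (P i)}))
      rintro x ⟨A, _, rfl⟩
      exact upperDensity_le_one hd A
    have main : ∀ k : ℕ, k ≤ n →
        (∏ i ∈ Finset.univ.filter (fun i : Fin n => (i:ℕ) < k), mRd (P i)) ≤
        sSup (upperDensity ''
          {A : Set (EuclideanSpace ℝ (Fin d)) |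
            MeasurableSet A ∧ ∀ i : Fin n, (i:ℕ) < k → ¬ hasCopy A (P i)}) := by
      intro k hkn
      induction k with
      | zero =>
        have e0 : Finset.univ.filter (fun i : Fin n => (i:ℕ) < 0) = ∅ := by
          apply Finset.filter_false_of_mem
          intro i _
          exact Nat.not_lt_zero _
        rw [e0, Finset.prod_empty]
        have hmem : (Set.univ : Set (EuclideanSpace ℝ (Fin d))) ∈
            {A : Set (EuclideanSpace ℝ (Fin d)) |
              MeasurableSet A ∧ ∀ i : Fin n, (i:ℕ) < 0 → ¬ hasCopy A (P i)} :=
          ⟨MeasurableSet.univ, fun i h => absurd h (Nat.not_lt_zero _)⟩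
        exact le_trans (one_le_upperDensity_univ hd)
          (le_csSup (upperDensity_bddAbove hd _) ⟨Set.univ, hmem, rfl⟩)
      | succ k ih =>
        have hkn' : k ≤ n := Nat.le_of_succ_le hkn
        have hkltn : k < n := Nat.lt_of_succ_le hkn
        set i0 : Fin n := ⟨k, hkltn⟩ with hi0def
        set Mk := sSup (upperDensity ''
          {A : Set (EuclideanSpace ℝ (Fin d)) |
            MeasurableSet A ∧ ∀ i : Fin n, (i:ℕ) < k → ¬ hasCopy A (P i)}) with hMk
        set Mk1 := sSup (upperDensity ''
          {A : Set (EuclideanSpace ℝ (Fin d)) |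
            MeasurableSet A ∧ ∀ i : Fin n, (i:ℕ) < k + 1 → ¬ hasCopy A (P i)}) with hMk1
        set m0 := mRd (P i0) with hm0def
        have hIH := ih hkn'
        -- split the product
        have hsplit : Finset.univ.filter (fun i : Fin n => (i:ℕ) < k + 1)
            = insert i0 (Finset.univ.filter (fun i : Fin n => (i:ℕ) < k)) := by
          ext i
          simp only [Finset.mem_filter, Finset.mem_univ, true_and, Finset.mem_insert]
          rw [Nat.lt_succ_iff_lt_or_eq]
          constructor
          · rintro (h | h)
            · exact Or.inr h
            · exact Or.inl (Fin.ext h)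
          · rintro (h | h)
            · exact Or.inr (by rw [h])
            · exact Or.inl h
        have hnotmem : i0 ∉ Finset.univ.filter (fun i : Fin n => (i:ℕ) < k) := by
          simp [hi0def]
        rw [hsplit, Finset.prod_insert hnotmem]
        -- empty set belongs to both avoidance families
        have hemptyK : (∅ : Set (EuclideanSpace ℝ (Fin d))) ∈
            {A : Set (EuclideanSpace ℝ (Fin d)) |
              MeasurableSet A ∧ ∀ i : Fin n, (i:ℕ) < k → ¬ hasCopy A (P i)} :=
          ⟨MeasurableSet.empty, fun i _ => not_hasCopy_empty (hPne i)⟩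
        have hMk_nonneg : 0 ≤ Mk :=
          le_trans (upperDensity_nonneg hd ∅) (le_csSup (upperDensity_bddAbove hd _)
            ⟨∅, hemptyK, rfl⟩)
        have hMk_le_one : Mk ≤ 1 := by
          apply csSup_le (Set.Nonempty.image upperDensity ⟨∅, hemptyK⟩)
          rintro x ⟨A, _, rfl⟩
          exact upperDensity_le_one hd A
        have hprod_nonneg : 0 ≤ ∏ i ∈ Finset.univ.filter (fun i : Fin n => (i:ℕ) < k),
            mRd (P i) := Finset.prod_nonneg fun i _ => hmRd_nonneg i
        -- the key estimate : m0 * Mk ≤ Mk1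
        obtain ⟨D₀, hD₀0, hD₀⟩ := hDi i0
        have heps : ∀ ε : ℝ, 0 < ε → ε ≤ 1 → m0 * Mk - 8*ε ≤ Mk1 := by
          intro ε hε hε1
          obtain ⟨xA, ⟨A, hAset, rfl⟩, hAd⟩ :=
            exists_lt_of_lt_csSup (Set.Nonempty.image upperDensity ⟨∅, hemptyK⟩)
              (by linarith : Mk - ε < Mk)
          obtain ⟨xB, ⟨B, hBset, rfl⟩, hBd⟩ :=
            exists_lt_of_lt_csSup (Set.Nonempty.image upperDensity
              (⟨∅, MeasurableSet.empty, not_hasCopy_empty (hPne i0)⟩ :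
                Set.Nonempty {A : Set (EuclideanSpace ℝ (Fin d)) |
                  MeasurableSet A ∧ ¬ hasCopy A (P i0)}))
              (by linarith : m0 - ε < m0)
          obtain ⟨C, hCm, hCA, hCcopy, hCd⟩ :=
            key_lemma hd A B hAset.1 hBset.1 hD₀0 hε hε1
          have hCset : C ∈ {A : Set (EuclideanSpace ℝ (Fin d)) |
              MeasurableSet A ∧ ∀ i : Fin n, (i:ℕ) < k + 1 → ¬ hasCopy A (P i)} := by
            refine ⟨hCm, fun i hik => ?_⟩
            rcases Nat.lt_succ_iff_lt_or_eq.mp hik with h | h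
            · exact fun hcp => hAset.2 i h (hasCopy_mono hCA hcp)
            · have hi : i = i0 := Fin.ext h
              rw [hi]
              exact fun hcp => hBset.2 (hCcopy (P i0) hD₀ hcp)
          have hCle : upperDensity C ≤ Mk1 :=
            le_csSup (upperDensity_bddAbove hd _) ⟨C, hCset, rfl⟩
          have hA0 := upperDensity_nonneg hd A
          have hA1 := upperDensity_le_one hd A
          have hB0 := upperDensity_nonneg hd B
          have hB1 := upperDensity_le_one hd B
          have hC0 := upperDensity_nonneg hd C
          have hm00 := hmRd_nonneg i0
          have hm01 := hmRd_le_one i0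
          rcases le_or_gt Mk ε with hcase | hcase
          · nlinarith
          · rcases le_or_gt m0 ε with hcase2 | hcase2
            · nlinarith
            · have h1 : Mk - ε ≤ upperDensity A := hAd.le
              have h2 : m0 - ε ≤ upperDensity B := hBd.le
              have h3 : (Mk - ε) * (m0 - ε) ≤ upperDensity A * upperDensity B :=
                mul_le_mul h1 h2 (by linarith) hA0
              nlinarith
        have hMM : m0 * Mk ≤ Mk1 := by
          by_contra hcon
          push_neg at hcon
          set dff := m0 * Mk - Mk1 with hdff
          have hdpos : 0 < dff := by rw [hdff]; linarith
          set εv := min 1 (dff/9) with hεv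
          have hεv0 : 0 < εv := lt_min one_pos (by positivity)
          have hεv1 : εv ≤ 1 := min_le_left _ _
          have h8 := heps εv hεv0 hεv1
          have h9 : εv ≤ dff/9 := min_le_right _ _
          rw [hdff] at h9
          linarith
        calc m0 * ∏ i ∈ Finset.univ.filter (fun i : Fin n => (i:ℕ) < k), mRd (P i)
            ≤ m0 * Mk := mul_le_mul_of_nonneg_left hIH (hmRd_nonneg i0)
          _ ≤ Mk1 := hMM
    have hfin := main n le_rfl
    have e1 : Finset.univ.filter (fun i : Fin n => (i:ℕ) < n) = Finset.univ := by
      apply Finset.filter_true_of_mem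
      intro i _
      exact i.isLt
    have e2 : {A : Set (EuclideanSpace ℝ (Fin d)) |
        MeasurableSet A ∧ ∀ i : Fin n, (i:ℕ) < n → ¬ hasCopy A (P i)}
        = {A : Set (EuclideanSpace ℝ (Fin d)) | MeasurableSet A ∧ ∀ i, ¬ hasCopy A (P i)} := by
      ext A
      simp only [Set.mem_setOf_eq, and_congr_right_iff]
      intro _
      exact ⟨fun h i => h i i.isLt, fun h i _ => h i⟩
    rw [e1, e2] at hfin
    exact hfin
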